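/- Fix a positive rational q and let Â : [0,1) → ℝ be a continuously differentiable function such that Â(β) ∈ (0, 1/(1+β)) and q·T₁(β,Â(β)) = T₂(β,Â(β)) for all β ∈ [0,1). Then there exists β₀ ∈ (0,1) such that the energy function E(β) = −2aβ·Â(β) is strictly decreasing on [0,β₀]; moreover E(0) = 0, so setting E₀ = −E(β₀) > 0, the map E is a strictly decreasing bijection from (0,β₀) onto (−E₀,0). -/

import Mathlib

open Real Filter Topology

/-- The complete elliptic integral of the first kind,
`K(κ) = ∫₀¹ dv / √((1 - v²)(1 - κ² v²))`. -/
noncomputable def K (κ : ℝ) : ℝ :=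
  ∫ v in (0:ℝ)..1, 1 / Real.sqrt ((1 - v ^ 2) * (1 - κ ^ 2 * v ^ 2))

/-- The modulus `κ₁(β, A₁)`, defined by
`κ₁² = (A₁(1-β) + √(1-4βA₁²)) / (2√(1-4βA₁²))`. -/
noncomputable def κ₁ (β A₁ : ℝ) : ℝ :=
  Real.sqrt ((A₁ * (1 - β) + Real.sqrt (1 - 4 * β * A₁ ^ 2)) /
    (2 * Real.sqrt (1 - 4 * β * A₁ ^ 2)))

/-- The modulus `κ₂(β)`, defined by `κ₂² = β/(1+β)`. -/
noncomputable def κ₂ (β : ℝ) : ℝ := Real.sqrt (β / (1 + β))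

/-- The period `T₁(β,A₁) = 2√(2/a) (1-4βA₁²)^{-1/4} K(κ₁(β,A₁))` of the ξ-motion. -/
noncomputable def T₁ (a β A₁ : ℝ) : ℝ :=
  2 * Real.sqrt (2 / a) / (1 - 4 * β * A₁ ^ 2) ^ ((1:ℝ)/4) * K (κ₁ β A₁)

/-- The period `T₂(β,A₁) = 2/√(a A₁ (1+β)) · K(κ₂(β))` of the φ-motion. -/
noncomputable def T₂ (a β A₁ : ℝ) : ℝ :=
  2 / Real.sqrt (a * A₁ * (1 + β)) * K (κ₂ β)

/-- If `Ahat : [0,1) → ℝ` is `C¹` and solves `q T₁(β,Ahat(β)) = T₂(β,Ahat(β))` with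
`Ahat(β) ∈ (0, 1/(1+β))`, then there is `β₀ ∈ (0,1)` such that the energy
`E(β) = -2aβAhat(β)` is strictly decreasing on `[0,β₀]`; moreover `E(0) = 0`,
`E₀ := -E(β₀) > 0`, and `E` is a (strictly decreasing) bijection from
`(0,β₀)` onto `(-E₀, 0)`. -/
theorem energy_strictAnti (a : ℝ) (ha : 0 < a) (q : ℚ) (hq : 0 < q) (Ahat : ℝ → ℝ)
    (hC1 : ContDiffOn ℝ 1 Ahat (Set.Ico (0:ℝ) 1))
    (hAhat : ∀ β ∈ Set.Ico (0:ℝ) 1,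
      Ahat β ∈ Set.Ioo 0 (1 / (1 + β)) ∧ (q : ℝ) * T₁ a β (Ahat β) = T₂ a β (Ahat β)) :
    ∃ β₀ ∈ Set.Ioo (0:ℝ) 1,
      StrictAntiOn (fun β => -2 * a * β * Ahat β) (Set.Icc 0 β₀) ∧
      (-2 * a * (0:ℝ) * Ahat 0 = 0) ∧
      0 < -(-2 * a * β₀ * Ahat β₀) ∧
      Set.BijOn (fun β => -2 * a * β * Ahat β) (Set.Ioo 0 β₀)
        (Set.Ioo (-2 * a * β₀ * Ahat β₀) 0) := by

  have hud : UniqueDiffOn ℝ (Set.Ico (0:ℝ) 1) := uniqueDiffOn_Ico 0 1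
  set g := derivWithin Ahat (Set.Ico (0:ℝ) 1) with hg
  have hgc : ContinuousOn g (Set.Ico (0:ℝ) 1) := hC1.continuousOn_derivWithin hud le_rfl
  have hAc : ContinuousOn Ahat (Set.Ico (0:ℝ) 1) := hC1.continuousOn
  have h0 : (0:ℝ) ∈ Set.Ico (0:ℝ) 1 := by constructor <;> norm_num
  have hA0 : 0 < Ahat 0 := (hAhat 0 h0).1.1
  have hh : ContinuousWithinAt (fun x => Ahat x + x * g x) (Set.Ico (0:ℝ) 1) 0 :=
    (hAc 0 h0).add (continuousWithinAt_id.mul (hgc 0 h0))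
  have hlim : 0 < Ahat 0 + 0 * g 0 := by simpa using hA0
  have hpos : ∀ᶠ x in 𝓝[Set.Ico (0:ℝ) 1] (0:ℝ), 0 < Ahat x + x * g x :=
    hh.eventually (eventually_gt_nhds hlim)
  rw [eventually_nhdsWithin_iff, Metric.eventually_nhds_iff] at hpos
  obtain ⟨ε, hε, hball⟩ := hpos
  set β₀ : ℝ := min (ε/2) (1/2) with hβ₀
  have hβ₀pos : 0 < β₀ := lt_min (by linarith) (by norm_num)
  have hβ₀half : β₀ ≤ 1/2 := min_le_right _ _
  have hβ₀lt1 : β₀ < 1 := lt_of_le_of_lt hβ₀half (by norm_num)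
  have hsub : Set.Icc (0:ℝ) β₀ ⊆ Set.Ico (0:ℝ) 1 := fun x hx =>
    ⟨hx.1, lt_of_le_of_lt hx.2 hβ₀lt1⟩
  set f : ℝ → ℝ := fun β => -2 * a * β * Ahat β with hf
  have hfc : ContinuousOn f (Set.Icc (0:ℝ) β₀) := by
    apply ContinuousOn.mul _ (hAc.mono hsub)
    exact (continuousOn_const.mul continuousOn_id)
  have hderiv : ∀ x ∈ Set.Ioo (0:ℝ) β₀, deriv f x < 0 := by
    intro x hx
    have hxIco : x ∈ Set.Ico (0:ℝ) 1 := hsub ⟨hx.1.le, hx.2.le⟩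
    have hxnhds : Set.Ico (0:ℝ) 1 ∈ 𝓝 x :=
      mem_nhds_iff.mpr ⟨Set.Ioo 0 1, Set.Ioo_subset_Ico_self, isOpen_Ioo,
        ⟨hx.1, by linarith [hx.2]⟩⟩
    have hdiff : DifferentiableAt ℝ Ahat x :=
      (hC1.contDiffAt hxnhds).differentiableAt one_ne_zero
    have hgx : g x = deriv Ahat x := derivWithin_of_mem_nhds hxnhds
    have hAd : HasDerivAt Ahat (deriv Ahat x) x := hdiff.hasDerivAt
    have hid : HasDerivAt (fun β : ℝ => -2 * a * β) (-2 * a) x := by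
      simpa using (hasDerivAt_id x).const_mul (-2 * a)
    have hfd : HasDerivAt f ((-2 * a) * Ahat x + (-2 * a * x) * deriv Ahat x) x :=
      hid.mul hAd
    rw [hfd.deriv]
    have hhx : 0 < Ahat x + x * g x := by
      have hd : dist x 0 < ε := by
        rw [Real.dist_eq, sub_zero, abs_of_pos hx.1]
        calc x < β₀ := hx.2
          _ ≤ ε/2 := min_le_left _ _
          _ < ε := by linarith
      exact hball hd hxIco
    rw [hgx] at hhx
    nlinarith
  have hanti : StrictAntiOn f (Set.Icc (0:ℝ) β₀) := by
    apply strictAntiOn_of_deriv_neg (convex_Icc 0 β₀) hfc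
    intro x hx
    rw [interior_Icc] at hx
    exact hderiv x hx
  have hβ₀Ico : β₀ ∈ Set.Ico (0:ℝ) 1 := ⟨hβ₀pos.le, hβ₀lt1⟩
  have hAβ₀ : 0 < Ahat β₀ := (hAhat β₀ hβ₀Ico).1.1
  have hf0 : f 0 = 0 := by simp [hf]
  have hfβ₀neg : f β₀ < 0 := by
    have := hanti (Set.left_mem_Icc.mpr hβ₀pos.le) (Set.right_mem_Icc.mpr hβ₀pos.le) hβ₀pos
    rw [hf0] at this; exact this
  refine ⟨β₀, ⟨hβ₀pos, hβ₀lt1⟩, hanti, by ring, by simp [hf] at hfβ₀neg ⊢; nlinarith, ?_⟩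
  refine ⟨?_, hanti.injOn.mono Set.Ioo_subset_Icc_self, ?_⟩
  · intro x hx
    constructor
    · exact hanti ⟨hx.1.le, hx.2.le⟩ (Set.right_mem_Icc.mpr hβ₀pos.le) hx.2
    · have := hanti (Set.left_mem_Icc.mpr hβ₀pos.le) ⟨hx.1.le, hx.2.le⟩ hx.1
      rw [hf0] at this; exact this
  · have := intermediate_value_Ioo' hβ₀pos.le hfc
    rw [hf0] at this
    exact this
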